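/- Fix τ₁ > 0, τ₂ > 0, integers K and N with 1 ≤ K and 2K < N, a constant c_h > 0, and real numbers h_1, …, h_N with 0 < h_i ≤ c_h for all i. Then the function L(λ) = (K/N)λ + (τ₂/2)λ² + (1/N) Σ_{i=1}^N τ₁ ln(1 + exp((h_i − λ)/τ₁)) has a unique minimizer λ* over ℝ, the derivative L′(λ) is negative for all λ ≤ 0 and positive for all λ ≥ c_h + τ₁ ln N, and consequently 0 < λ* < c_h + τ₁ ln N. -/

import Mathlib

open Finset

/-- The smoothed lower-level objective
`L(λ) = (K/N)λ + (τ₂/2)λ² + (1/N) Σᵢ τ₁ ln(1 + exp((hᵢ − λ)/τ₁))`. -/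
noncomputable def smoothedL (τ₁ τ₂ : ℝ) (K : ℕ) (N : ℕ) (h : Fin N → ℝ) (lam : ℝ) : ℝ :=
  ((K : ℝ) / N) * lam + (τ₂ / 2) * lam ^ 2 +
    (1 / N : ℝ) * ∑ i, τ₁ * Real.log (1 + Real.exp ((h i - lam) / τ₁))

/-- sigmoid of (hi - lam)/τ₁ -/
noncomputable def sigTerm (τ₁ hi lam : ℝ) : ℝ :=
  Real.exp ((hi - lam) / τ₁) / (1 + Real.exp ((hi - lam) / τ₁))

lemma one_add_exp_pos (x : ℝ) : 0 < 1 + Real.exp x :=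
  by positivity

lemma hasDerivAt_smoothedL (τ₁ τ₂ : ℝ) (hτ₁ : 0 < τ₁) (K N : ℕ) (h : Fin N → ℝ) (lam : ℝ) :
    HasDerivAt (smoothedL τ₁ τ₂ K N h)
      ((K : ℝ) / N + τ₂ * lam - (1 / N : ℝ) * ∑ i, sigTerm τ₁ (h i) lam) lam := by
  have h1 : HasDerivAt (fun l : ℝ => ((K : ℝ) / N) * l) ((K : ℝ) / N) lam := by
    simpa using (hasDerivAt_id lam).const_mul ((K : ℝ) / N)
  have h2 : HasDerivAt (fun l : ℝ => (τ₂ / 2) * l ^ 2) (τ₂ * lam) lam := by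
    have := (hasDerivAt_pow 2 lam).const_mul (τ₂ / 2)
    refine this.congr_deriv ?_
    ring
  have h3 : ∀ i : Fin N, HasDerivAt (fun l : ℝ => τ₁ * Real.log (1 + Real.exp ((h i - l) / τ₁)))
      (-(sigTerm τ₁ (h i) lam)) lam := by
    intro i
    have hu : HasDerivAt (fun l : ℝ => (h i - l) / τ₁) (-1 / τ₁) lam := by
      have : HasDerivAt (fun l : ℝ => h i - l) (-1) lam := by
        simpa using (hasDerivAt_id lam).const_sub (h i)
      simpa using this.div_const τ₁
    have hexp : HasDerivAt (fun l : ℝ => Real.exp ((h i - l) / τ₁))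
        (Real.exp ((h i - lam) / τ₁) * (-1 / τ₁)) lam := (Real.hasDerivAt_exp _).comp lam hu
    have hadd : HasDerivAt (fun l : ℝ => 1 + Real.exp ((h i - l) / τ₁))
        (Real.exp ((h i - lam) / τ₁) * (-1 / τ₁)) lam := hexp.const_add 1
    have hlog := (hadd.log (ne_of_gt (one_add_exp_pos _)))
    have := hlog.const_mul τ₁
    refine this.congr_deriv ?_
    unfold sigTerm
    field_simp
  have hsum : HasDerivAt (fun l : ℝ => ∑ i, τ₁ * Real.log (1 + Real.exp ((h i - l) / τ₁)))
      (∑ i, -(sigTerm τ₁ (h i) lam)) lam := HasDerivAt.fun_sum (fun i _ => h3 i)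
  have := (h1.add h2).add ((hsum.const_mul ((1 : ℝ) / N)))
  refine this.congr_deriv ?_
  rw [Finset.sum_neg_distrib]
  ring

lemma sigTerm_pos (τ₁ hi lam : ℝ) : 0 < sigTerm τ₁ hi lam := by
  unfold sigTerm
  exact div_pos (Real.exp_pos _) (one_add_exp_pos _)

lemma sigTerm_anti (τ₁ hi : ℝ) (hτ₁ : 0 < τ₁) {a b : ℝ} (hab : a ≤ b) :
    sigTerm τ₁ hi b ≤ sigTerm τ₁ hi a := by
  unfold sigTerm
  rw [div_le_div_iff₀ (one_add_exp_pos _) (one_add_exp_pos _)]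
  have he : Real.exp ((hi - b) / τ₁) ≤ Real.exp ((hi - a) / τ₁) := by
    apply Real.exp_le_exp.2
    exact div_le_div_of_nonneg_right (by linarith) hτ₁.le
  nlinarith [Real.exp_pos ((hi - b) / τ₁), Real.exp_pos ((hi - a) / τ₁)]

lemma half_lt_sigTerm (τ₁ hi lam : ℝ) (hτ₁ : 0 < τ₁) (hpos : 0 < hi - lam) :
    1 / 2 < sigTerm τ₁ hi lam := by
  unfold sigTerm
  have h1 : 1 < Real.exp ((hi - lam) / τ₁) := by
    rw [show (1:ℝ) = Real.exp 0 by simp]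
    exact Real.exp_lt_exp.2 (div_pos hpos hτ₁)
  rw [div_lt_div_iff₀ (by norm_num) (one_add_exp_pos _)]
  linarith

lemma sigTerm_le_exp (τ₁ hi lam : ℝ) : sigTerm τ₁ hi lam ≤ Real.exp ((hi - lam) / τ₁) := by
  unfold sigTerm
  apply div_le_self (Real.exp_pos _).le
  linarith [Real.exp_pos ((hi - lam) / τ₁)]

/-- for `1 ≤ K`, `2K < N` and scores `0 < hᵢ ≤ c_h`, the smoothed objective
`L` has a unique minimizer `λ*`, its derivative is negative on `(-∞, 0]` and positive on
`[c_h + τ₁ ln N, ∞)`, and `0 < λ* < c_h + τ₁ ln N`. -/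
theorem smoothedL_minimizer_bounds
    (τ₁ τ₂ : ℝ) (hτ₁ : 0 < τ₁) (hτ₂ : 0 < τ₂) (K N : ℕ)
    (hK : 1 ≤ K) (hKN : 2 * K < N) (c_h : ℝ) (hc : 0 < c_h)
    (h : Fin N → ℝ) (hh : ∀ i, 0 < h i ∧ h i ≤ c_h) :
    ∃ lamStar : ℝ,
      (∀ μ : ℝ, smoothedL τ₁ τ₂ K N h lamStar ≤ smoothedL τ₁ τ₂ K N h μ) ∧
      (∀ μ : ℝ, (∀ ν : ℝ, smoothedL τ₁ τ₂ K N h μ ≤ smoothedL τ₁ τ₂ K N h ν) →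
        μ = lamStar) ∧
      (∀ lam : ℝ, lam ≤ 0 → deriv (smoothedL τ₁ τ₂ K N h) lam < 0) ∧
      (∀ lam : ℝ, c_h + τ₁ * Real.log N ≤ lam →
        0 < deriv (smoothedL τ₁ τ₂ K N h) lam) ∧
      0 < lamStar ∧ lamStar < c_h + τ₁ * Real.log N := by
  set f := smoothedL τ₁ τ₂ K N h with hf
  set M := c_h + τ₁ * Real.log N with hM
  have hN3 : 3 ≤ N := by omega
  have hN0 : (0 : ℝ) < N := by exact_mod_cast Nat.lt_of_lt_of_le (by norm_num) hN3
  have hNe : Nonempty (Fin N) := ⟨⟨0, by omega⟩⟩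
  have hlogN : 0 < Real.log N := Real.log_pos (by exact_mod_cast Nat.lt_of_lt_of_le (by norm_num) hN3)
  have hM0 : 0 < M := by positivity
  -- derivative formula
  have hD : ∀ lam : ℝ, deriv f lam =
      (K : ℝ) / N + τ₂ * lam - (1 / N : ℝ) * ∑ i, sigTerm τ₁ (h i) lam :=
    fun lam => (hasDerivAt_smoothedL τ₁ τ₂ hτ₁ K N h lam).deriv
  have hdiff : Differentiable ℝ f :=
    fun lam => (hasDerivAt_smoothedL τ₁ τ₂ hτ₁ K N h lam).differentiableAt
  have hcont : Continuous f := hdiff.continuous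
  -- deriv negative for lam ≤ 0
  have hneg : ∀ lam : ℝ, lam ≤ 0 → deriv f lam < 0 := by
    intro lam hlam
    rw [hD]
    have hsum : (N : ℝ) * (1 / 2) < ∑ i, sigTerm τ₁ (h i) lam := by
      have := Finset.sum_lt_sum_of_nonempty (Finset.univ_nonempty (α := Fin N))
        (f := fun _ => (1 : ℝ) / 2) (g := fun i => sigTerm τ₁ (h i) lam)
        (fun i _ => half_lt_sigTerm τ₁ (h i) lam hτ₁ (by linarith [(hh i).1]))
      simpa [Finset.card_univ, mul_comm] using this
    have h1 : (1 / N : ℝ) * ∑ i, sigTerm τ₁ (h i) lam > 1 / 2 := by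
      rw [gt_iff_lt, show (1/2 : ℝ) = (1/N) * ((N:ℝ) * (1/2)) by field_simp]
      exact mul_lt_mul_of_pos_left hsum (by positivity)
    have h2 : (K : ℝ) / N < 1 / 2 := by
      rw [div_lt_div_iff₀ hN0 (by norm_num)]
      push_cast
      exact_mod_cast by nlinarith [hKN, (show (2*K : ℝ) < N by exact_mod_cast hKN)]
    nlinarith [mul_nonpos_of_nonneg_of_nonpos hτ₂.le hlam]
  -- deriv positive for lam ≥ M
  have hpos : ∀ lam : ℝ, M ≤ lam → 0 < deriv f lam := by
    intro lam hlam
    rw [hD]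
    have hsum : ∑ i, sigTerm τ₁ (h i) lam ≤ 1 := by
      calc ∑ i, sigTerm τ₁ (h i) lam ≤ ∑ _i : Fin N, (1 / N : ℝ) := by
            apply Finset.sum_le_sum
            intro i _
            refine (sigTerm_le_exp τ₁ (h i) lam).trans ?_
            have : (h i - lam) / τ₁ ≤ -Real.log N := by
              rw [div_le_iff₀ hτ₁]
              have := (hh i).2
              nlinarith
            calc Real.exp ((h i - lam) / τ₁) ≤ Real.exp (-Real.log N) := Real.exp_le_exp.2 this
              _ = 1 / N := by rw [Real.exp_neg, Real.exp_log hN0]; ring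
        _ = 1 := by rw [Finset.sum_const, Finset.card_univ, Fintype.card_fin, nsmul_eq_mul]; field_simp
    have hK1 : (1 : ℝ) / N ≤ (K : ℝ) / N := by
      gcongr
      exact_mod_cast hK

    have : (1 / N : ℝ) * ∑ i, sigTerm τ₁ (h i) lam ≤ 1 / N := by
      calc (1 / N : ℝ) * ∑ i, sigTerm τ₁ (h i) lam ≤ (1 / N : ℝ) * 1 :=
            mul_le_mul_of_nonneg_left hsum (by positivity)
        _ = 1 / N := mul_one _
    nlinarith [mul_pos hτ₂ (hM0.trans_le hlam)]
  -- strict mono deriv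
  have hmono : StrictMono (deriv f) := by
    intro a b hab
    rw [hD, hD]
    have hs : ∑ i, sigTerm τ₁ (h i) b ≤ ∑ i, sigTerm τ₁ (h i) a :=
      Finset.sum_le_sum fun i _ => sigTerm_anti τ₁ (h i) hτ₁ hab.le
    have := mul_le_mul_of_nonneg_left hs (show (0:ℝ) ≤ 1/N by positivity)
    nlinarith [mul_lt_mul_of_pos_left hab hτ₂]
  have hconv : StrictConvexOn ℝ Set.univ f := hmono.strictConvexOn_univ_of_deriv hcont
  -- min on [0, M]
  obtain ⟨lamStar, hmem, hminOn⟩ :=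
    (isCompact_Icc (a := (0:ℝ)) (b := M)).exists_isMinOn ⟨0, by constructor <;> [rfl; exact hM0.le]⟩
      hcont.continuousOn
  -- strict anti on Iic 0, strict mono on Ici M
  have hanti : StrictAntiOn f (Set.Iic 0) := by
    apply strictAntiOn_of_deriv_neg (convex_Iic 0) hcont.continuousOn
    intro x hx
    rw [interior_Iic] at hx
    exact hneg x (le_of_lt hx)
  have hmonoOn : StrictMonoOn f (Set.Ici M) := by
    apply strictMonoOn_of_deriv_pos (convex_Ici M) hcont.continuousOn
    intro x hx
    rw [interior_Ici] at hx
    exact hpos x (le_of_lt hx)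
  -- global minimum
  have hglobal : ∀ μ : ℝ, f lamStar ≤ f μ := by
    intro μ
    rcases lt_or_ge μ 0 with hμ | hμ0
    · have h1 : f 0 < f μ := hanti (le_of_lt hμ) (Set.mem_Iic.2 le_rfl) hμ
      have h2 : f lamStar ≤ f 0 := hminOn ⟨le_rfl, hM0.le⟩
      linarith
    · rcases le_or_gt μ M with hμM | hμM
      · exact hminOn ⟨hμ0, hμM⟩
      · have h1 : f M < f μ := hmonoOn (Set.mem_Ici.2 le_rfl) (Set.mem_Ici.2 (le_of_lt hμM)) hμM
        have h2 : f lamStar ≤ f M := hminOn ⟨hM0.le, le_rfl⟩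
        linarith
  have hminUniv : IsMinOn f Set.univ lamStar := fun μ _ => hglobal μ
  -- deriv zero at lamStar
  have hlocal : IsLocalMin f lamStar := Filter.Eventually.of_forall hglobal
  have hderiv0 : deriv f lamStar = 0 := hlocal.deriv_eq_zero
  refine ⟨lamStar, hglobal, ?_, hneg, hpos, ?_, ?_⟩
  · intro μ hμ
    have : IsMinOn f Set.univ μ := fun ν _ => hμ ν
    exact hconv.eq_of_isMinOn this hminUniv (Set.mem_univ _) (Set.mem_univ _)
  · by_contra hle
    push_neg at hle
    exact absurd hderiv0 (ne_of_lt (hneg lamStar hle))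
  · by_contra hle
    push_neg at hle
    exact absurd hderiv0 (ne_of_gt (hpos lamStar hle))
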